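/- Let 0 ≤ pᵢ < qᵢ ≤ pᵢ + Kᵢ, Kᵢ > 0, w > 0, K₀ ≥ 0. Then for every probability measure π on ℝ₊ⁿ with E_π[xᵢ] = qᵢ and E_π[(xᵢ−Kᵢ)₊] = pᵢ, we have E_π[(wᵀx − K₀)₊] ≤ max_{0 ≤ j ≤ n+1} [ wᵀp + Σᵢ wᵢ min(qᵢ−pᵢ, β_j Kᵢ) − β_j K₀ ], where β_j = (q_j−p_j)/K_j for 1 ≤ j ≤ n, β₀ = 0 and β_{n+1} = 1. -/

import Mathlib

open MeasureTheory Filter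

-- pointwise dual inequality
lemma wduf_pointwise {n : ℕ} (w K β : Fin n → ℝ) (K0 : ℝ)
    (hw : ∀ i, 0 ≤ w i) (hβ0 : ∀ i, 0 ≤ β i) (hβ1 : ∀ i, β i ≤ 1)
    (x : Fin n → ℝ) (hx : ∀ i, 0 ≤ x i) :
    max (∑ i, w i * x i - K0) 0 ≤
      (∑ i, w i * ((1 - β i) * x i + β i * max (x i - K i) 0)) +
        max ((∑ i, w i * β i * K i) - K0) 0 := by
  apply max_le
  · have h1 : ∀ i ∈ Finset.univ, w i * x i ≤
        w i * ((1 - β i) * x i + β i * max (x i - K i) 0) + w i * β i * K i := by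
      intro i _
      have h := le_max_left (x i - K i) 0
      nlinarith [mul_nonneg (mul_nonneg (hw i) (hβ0 i)) (sub_nonneg.2 h)]
    have h2 := Finset.sum_le_sum h1
    rw [Finset.sum_add_distrib] at h2
    have h3 := le_max_left ((∑ i, w i * β i * K i) - K0) 0
    linarith
  · have h1 : (0:ℝ) ≤ ∑ i, w i * ((1 - β i) * x i + β i * max (x i - K i) 0) := by
      apply Finset.sum_nonneg
      intro i _
      apply mul_nonneg (hw i)
      have := le_max_right (x i - K i) 0
      have := hx i
      have := hβ0 i
      have := hβ1 i
      nlinarith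
    have h2 := le_max_right ((∑ i, w i * β i * K i) - K0) 0
    linarith

-- integral bound
lemma wduf_integral {n : ℕ} (p q K w β : Fin n → ℝ) (K0 : ℝ)
    (hw : ∀ i, 0 ≤ w i) (hβ0 : ∀ i, 0 ≤ β i) (hβ1 : ∀ i, β i ≤ 1)
    (π : Measure (Fin n → ℝ)) [IsProbabilityMeasure π]
    (hsupp : ∀ᵐ x ∂π, ∀ i, 0 ≤ x i)
    (hintC : Integrable (fun x => max (∑ i, w i * x i - K0) 0) π)
    (hintx : ∀ i, Integrable (fun x => x i) π)
    (hintK : ∀ i, Integrable (fun x => max (x i - K i) 0) π)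
    (hq : ∀ i, ∫ x, x i ∂π = q i)
    (hpp : ∀ i, ∫ x, max (x i - K i) 0 ∂π = p i) :
    ∫ x, max (∑ i, w i * x i - K0) 0 ∂π ≤
      (∑ i, w i * ((1 - β i) * q i + β i * p i)) +
        max ((∑ i, w i * β i * K i) - K0) 0 := by
  have hginti : ∀ i ∈ (Finset.univ : Finset (Fin n)), Integrable
      (fun x => w i * ((1 - β i) * x i + β i * max (x i - K i) 0)) π := by
    intro i _
    exact (((hintx i).const_mul (1 - β i)).add ((hintK i).const_mul (β i))).const_mul (w i)
  have hgint : Integrable (fun x =>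
      (∑ i, w i * ((1 - β i) * x i + β i * max (x i - K i) 0)) +
        max ((∑ i, w i * β i * K i) - K0) 0) π :=
    (integrable_finset_sum _ hginti).add (integrable_const _)
  have hmono : ∀ᵐ x ∂π, max (∑ i, w i * x i - K0) 0 ≤
      (∑ i, w i * ((1 - β i) * x i + β i * max (x i - K i) 0)) +
        max ((∑ i, w i * β i * K i) - K0) 0 :=
    hsupp.mono fun x hx => wduf_pointwise w K β K0 hw hβ0 hβ1 x hx
  calc ∫ x, max (∑ i, w i * x i - K0) 0 ∂π ≤ _ := integral_mono_ae hintC hgint hmono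
    _ = _ := by
      rw [integral_add (integrable_finset_sum _ hginti) (integrable_const _),
        integral_finset_sum _ hginti, integral_const]
      simp only [measure_univ, ENNReal.toReal_one, probReal_univ, one_smul]
      congr 1
      apply Finset.sum_congr rfl
      intro i _
      rw [integral_const_mul, integral_add ((hintx i).const_mul _) ((hintK i).const_mul _),
        integral_const_mul, integral_const_mul, hq i, hpp i]

theorem weak_duality_upper_forward {n : ℕ} (p q K w : Fin n → ℝ) (K0 : ℝ)
    (hp : ∀ i, 0 ≤ p i) (hK : ∀ i, 0 < K i) (hw : ∀ i, 0 < w i) (hK0 : 0 ≤ K0)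
    (hpq : ∀ i, p i < q i) (hqk : ∀ i, q i ≤ p i + K i)
    (π : Measure (Fin n → ℝ)) [IsProbabilityMeasure π]
    (hsupp : ∀ᵐ x ∂π, ∀ i, 0 ≤ x i)
    (hintC : Integrable (fun x => max (∑ i, w i * x i - K0) 0) π)
    (hintx : ∀ i, Integrable (fun x => x i) π)
    (hintK : ∀ i, Integrable (fun x => max (x i - K i) 0) π)
    (hq : ∀ i, ∫ x, x i ∂π = q i)
    (hpp : ∀ i, ∫ x, max (x i - K i) 0 ∂π = p i) :
    ∫ x, max (∑ i, w i * x i - K0) 0 ∂π ≤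
      (insert (0:ℝ) (insert 1 (Finset.image (fun j => (q j - p j) / K j)
        Finset.univ))).sup' (Finset.insert_nonempty _ _)
        (fun β => ∑ i, w i * p i + ∑ i, w i * min (q i - p i) (β * K i) - β * K0) := by
  classical
  set γ : Fin n → ℝ := fun j => (q j - p j) / K j with hγdef
  set C : Finset ℝ := insert (0:ℝ) (insert 1 (Finset.image γ Finset.univ)) with hCdef
  set f : ℝ → ℝ :=
    fun β => ∑ i, w i * p i + ∑ i, w i * min (q i - p i) (β * K i) - β * K0 with hfdef
  have hγpos : ∀ i, 0 < γ i := fun i => div_pos (by linarith [hpq i]) (hK i)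
  have hγ1 : ∀ i, γ i ≤ 1 := fun i =>
    (div_le_one (hK i)).2 (by linarith [hqk i])
  have hγK : ∀ i, γ i * K i = q i - p i := fun i => div_mul_cancel₀ _ (hK i).ne'
  have hle : ∀ b ∈ C, f b ≤ C.sup' (Finset.insert_nonempty _ _) f :=
    fun b hb => Finset.le_sup' f hb
  by_cases hcase : ∑ i, w i * K i ≤ K0
  · -- take all β i = 1, value f 0
    have hbd := wduf_integral p q K w (fun _ => 1) K0 (fun i => (hw i).le)
      (fun _ => zero_le_one) (fun _ => le_refl 1) π hsupp hintC hintx hintK hq hpp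
    simp only [mul_one, one_mul, sub_self, zero_mul, zero_add] at hbd
    have h1 : max ((∑ i, w i * K i) - K0) 0 = 0 :=
      max_eq_right (sub_nonpos.2 hcase)
    rw [h1, add_zero] at hbd
    have hf0 : f 0 = ∑ i, w i * p i := by
      have hz : ∀ i ∈ (Finset.univ : Finset (Fin n)),
          w i * min (q i - p i) (0 * K i) = 0 := by
        intro i _
        rw [zero_mul, min_eq_right (by linarith [hpq i]), mul_zero]
      simp only [hfdef]
      rw [Finset.sum_eq_zero hz]
      ring
    have h0C : (0:ℝ) ∈ C := Finset.mem_insert_self _ _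
    calc ∫ x, max (∑ i, w i * x i - K0) 0 ∂π
        ≤ ∑ i, w i * p i := hbd
      _ = f 0 := hf0.symm
      _ ≤ _ := hle 0 h0C
  · push_neg at hcase
    -- candidate threshold set
    set T : Finset ℝ :=
      C.filter (fun b => ∑ i ∈ Finset.univ.filter (fun i => b < γ i), w i * K i ≤ K0)
      with hTdef
    have h1T : (1:ℝ) ∈ T := by
      rw [hTdef, Finset.mem_filter]
      refine ⟨Finset.mem_insert_of_mem (Finset.mem_insert_self _ _), ?_⟩
      have : Finset.univ.filter (fun i => (1:ℝ) < γ i) = ∅ := by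
        apply Finset.filter_eq_empty_iff.2
        intro i _
        exact not_lt.2 (hγ1 i)
      rw [this, Finset.sum_empty]
      exact hK0
    have hTne : T.Nonempty := ⟨1, h1T⟩
    set β0 : ℝ := T.min' hTne with hβ0def
    have hβ0T : β0 ∈ T := T.min'_mem hTne
    have hβ0C : β0 ∈ C := (Finset.mem_filter.1 hβ0T).1
    have hSA : ∑ i ∈ Finset.univ.filter (fun i => β0 < γ i), w i * K i ≤ K0 :=
      (Finset.mem_filter.1 hβ0T).2
    have hβ0pos : 0 < β0 := by
      by_contra h
      push_neg at h
      have : Finset.univ.filter (fun i => β0 < γ i) = Finset.univ := by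
        apply Finset.filter_eq_self.2
        intro i _
        exact lt_of_le_of_lt h (hγpos i)
      rw [this] at hSA
      exact absurd hSA (not_le.2 hcase)
    -- K0 ≤ sum over γ i ≥ β0
    have hSAB : K0 ≤ ∑ i ∈ Finset.univ.filter (fun i => β0 ≤ γ i), w i * K i := by
      by_contra h
      push_neg at h
      set D : Finset ℝ := C.filter (fun b => b < β0) with hDdef
      have h0D : (0:ℝ) ∈ D := by
        rw [hDdef, Finset.mem_filter]
        exact ⟨Finset.mem_insert_self _ _, hβ0pos⟩
      have hDne : D.Nonempty := ⟨0, h0D⟩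
      set b' : ℝ := D.max' hDne with hb'def
      have hb'D : b' ∈ D := D.max'_mem hDne
      have hb'C : b' ∈ C := (Finset.mem_filter.1 hb'D).1
      have hb'lt : b' < β0 := (Finset.mem_filter.1 hb'D).2
      have hsub : Finset.univ.filter (fun i => b' < γ i) ⊆
          Finset.univ.filter (fun i => β0 ≤ γ i) := by
        intro i hi
        rw [Finset.mem_filter] at hi ⊢
        refine ⟨Finset.mem_univ _, ?_⟩
        by_contra hc
        push_neg at hc
        have hγD : γ i ∈ D := by
          rw [hDdef, Finset.mem_filter]
          exact ⟨Finset.mem_insert_of_mem (Finset.mem_insert_of_mem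
            (Finset.mem_image_of_mem γ (Finset.mem_univ i))), hc⟩
        exact absurd hi.2 (not_lt.2 (D.le_max' _ hγD))
      have hb'sum : ∑ i ∈ Finset.univ.filter (fun i => b' < γ i), w i * K i ≤ K0 := by
        calc ∑ i ∈ Finset.univ.filter (fun i => b' < γ i), w i * K i
            ≤ ∑ i ∈ Finset.univ.filter (fun i => β0 ≤ γ i), w i * K i :=
              Finset.sum_le_sum_of_subset_of_nonneg hsub
                (fun i _ _ => mul_nonneg (hw i).le (hK i).le)
          _ ≤ K0 := h.le
      have hb'T : b' ∈ T := Finset.mem_filter.2 ⟨hb'C, hb'sum⟩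
      exact absurd (T.min'_le _ hb'T) (not_le.2 hb'lt)
    set A : Finset (Fin n) := Finset.univ.filter (fun i => β0 < γ i) with hAdef
    set B : Finset (Fin n) := Finset.univ.filter (fun i => γ i = β0) with hBdef
    set SA : ℝ := ∑ i ∈ A, w i * K i with hSAdef
    set SB : ℝ := ∑ i ∈ B, w i * K i with hSBdef
    have hunion : Finset.univ.filter (fun i => β0 ≤ γ i) = A ∪ B := by
      ext i
      simp only [hAdef, hBdef, Finset.mem_union, Finset.mem_filter, Finset.mem_univ, true_and]
      constructor
      · intro h
        rcases lt_or_eq_of_le h with h' | h'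
        · exact Or.inl h'
        · exact Or.inr h'.symm
      · rintro (h | h)
        · exact h.le
        · exact h.ge
    have hdisj : Disjoint A B := by
      rw [Finset.disjoint_left]
      intro i hiA hiB
      rw [hAdef, Finset.mem_filter] at hiA
      rw [hBdef, Finset.mem_filter] at hiB
      exact absurd hiB.2 (ne_of_gt hiA.2)
    have hK0AB : K0 ≤ SA + SB := by
      rw [hSAdef, hSBdef, ← Finset.sum_union hdisj, ← hunion]
      exact hSAB
    have hSBnonneg : 0 ≤ SB :=
      Finset.sum_nonneg fun i _ => mul_nonneg (hw i).le (hK i).le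
    set t : ℝ := if SB = 0 then 0 else (K0 - SA) / SB with htdef
    have ht0 : 0 ≤ t := by
      rw [htdef]
      split_ifs with h
      · exact le_refl 0
      · exact div_nonneg (by linarith) (lt_of_le_of_ne hSBnonneg (Ne.symm h)).le
    have ht1 : t ≤ 1 := by
      rw [htdef]
      split_ifs with h
      · exact zero_le_one
      · rw [div_le_one (lt_of_le_of_ne hSBnonneg (Ne.symm h))]
        linarith
    have htS : SA + t * SB = K0 := by
      rw [htdef]
      split_ifs with h
      · rw [h] at hK0AB ⊢
        linarith
      · field_simp
        ring
    set β : Fin n → ℝ := fun i => if β0 < γ i then 1 else if γ i = β0 then t else 0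
      with hβdef
    have hβ0' : ∀ i, 0 ≤ β i := by
      intro i; rw [hβdef]; dsimp only; split_ifs
      · exact zero_le_one
      · exact ht0
      · exact le_refl 0
    have hβ1' : ∀ i, β i ≤ 1 := by
      intro i; rw [hβdef]; dsimp only; split_ifs
      · exact le_refl 1
      · exact ht1
      · exact zero_le_one
    have hsumβ : ∑ i, w i * β i * K i = K0 := by
      have hterm : ∀ i ∈ (Finset.univ : Finset (Fin n)), w i * β i * K i =
          (if β0 < γ i then w i * K i else 0) +
          (if γ i = β0 then t * (w i * K i) else 0) := by
        intro i _
        rw [hβdef]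
        dsimp only
        split_ifs with h1 h2
        · rw [h2] at h1; exact absurd h1 (lt_irrefl _)
        · ring
        · ring
        · ring
      rw [Finset.sum_congr rfl hterm, Finset.sum_add_distrib,
        ← Finset.sum_filter, ← Finset.sum_filter, ← hAdef, ← hBdef,
        ← Finset.mul_sum, ← hSAdef, ← hSBdef]
      exact htS
    have hbd := wduf_integral p q K w β K0 (fun i => (hw i).le) hβ0' hβ1'
      π hsupp hintC hintx hintK hq hpp
    have hmax0 : max ((∑ i, w i * β i * K i) - K0) 0 = 0 := by
      rw [hsumβ, sub_self, max_self]
    have hval : (∑ i, w i * ((1 - β i) * q i + β i * p i)) = f β0 := by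
      have hterm : ∀ i ∈ (Finset.univ : Finset (Fin n)),
          w i * ((1 - β i) * q i + β i * p i) =
          w i * p i + w i * min (q i - p i) (β0 * K i) - β0 * (w i * β i * K i) := by
        intro i _
        rw [hβdef]
        dsimp only
        rcases lt_trichotomy β0 (γ i) with h | h | h
        · rw [if_pos h]
          have hmin : min (q i - p i) (β0 * K i) = β0 * K i := by
            apply min_eq_right
            rw [← hγK i]
            exact mul_le_mul_of_nonneg_right h.le (hK i).le
          rw [hmin]; ring
        · rw [if_neg (by rw [h]; exact lt_irrefl _), if_pos h.symm]
          have hqp : q i - p i = β0 * K i := by rw [← hγK i, h]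
          have hmin : min (q i - p i) (β0 * K i) = β0 * K i :=
            min_eq_right hqp.ge
          rw [hmin]
          linear_combination (w i * (1 - t)) * hqp
        · rw [if_neg (not_lt.2 h.le), if_neg (ne_of_lt h)]
          have hmin : min (q i - p i) (β0 * K i) = q i - p i := by
            apply min_eq_left
            rw [← hγK i]
            exact mul_le_mul_of_nonneg_right h.le (hK i).le
          rw [hmin]; ring
      rw [Finset.sum_congr rfl hterm, hfdef]
      dsimp only
      rw [Finset.sum_sub_distrib, Finset.sum_add_distrib, ← Finset.mul_sum, hsumβ]
    calc ∫ x, max (∑ i, w i * x i - K0) 0 ∂π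
        ≤ _ := hbd
      _ = f β0 := by rw [hmax0, add_zero, hval]
      _ ≤ _ := hle β0 hβ0C
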